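/- If F_n and F are CDFs on ℝ and ‖F_n − F‖₂ → 0 in L²(ℝ), and F is continuous, then F_n converges to F pointwise at every point, hence F_n converges weakly (in distribution) to F. -/
import Mathlib


open MeasureTheory Set Filter

/-- If `Fₙ` and `F` are CDFs on `ℝ`, `‖Fₙ - F‖₂ → 0` in `L²(ℝ)`, and `F`
is continuous, then `Fₙ → F` pointwise at every point, hence `Fₙ` converges weakly
(in distribution) to `F`. -/
theorem tendsto_pointwise_of_L2_tendsto_cdf
    (F : ℝ → ℝ) (Fn : ℕ → ℝ → ℝ)
    (hFmono : Monotone F) (hFrange : ∀ t, F t ∈ Icc (0 : ℝ) 1)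
    (hFcont : Continuous F)
    (hFnmono : ∀ n, Monotone (Fn n)) (hFnrange : ∀ n t, Fn n t ∈ Icc (0 : ℝ) 1)
    (hL2 : Tendsto (fun n => eLpNorm (fun t => Fn n t - F t) 2 volume)
      atTop (nhds 0)) :
    ∀ t, Tendsto (fun n => Fn n t) atTop (nhds (F t)) := by
  intro t
  rw [Metric.tendsto_atTop]
  intro ε hε
  obtain ⟨δ, hδ, hδε⟩ := Metric.continuous_iff.mp hFcont t (ε/2) (by linarith)
  set c : ENNReal := ENNReal.ofReal (ε/2) * ENNReal.ofReal (δ/2) ^ (1/(2:ℝ)) with hc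
  have hofδ : (0:ENNReal) < ENNReal.ofReal (δ/2) := ENNReal.ofReal_pos.mpr (by linarith)
  have hcpos : 0 < c := by
    apply ENNReal.mul_pos
    · exact (ENNReal.ofReal_pos.mpr (by linarith)).ne'
    · exact (ENNReal.rpow_pos hofδ ENNReal.ofReal_lt_top.ne).ne'
  have hev : ∀ᶠ n in atTop, eLpNorm (fun s => Fn n s - F s) 2 volume < c :=
    hL2.eventually_lt_const hcpos
  obtain ⟨N, hN⟩ := eventually_atTop.mp hev
  refine ⟨N, fun n hn => ?_⟩
  by_contra h
  push_neg at h
  rw [Real.dist_eq] at h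
  have key : ∃ I : Set ℝ, MeasurableSet I ∧ volume I = ENNReal.ofReal (δ/2) ∧
      ∀ s ∈ I, ε/2 ≤ |Fn n s - F s| := by
    rcases le_or_gt (F t) (Fn n t) with hle | hlt
    · have h3 : ε ≤ Fn n t - F t := by
        rw [abs_of_nonneg (by linarith)] at h; exact h
      refine ⟨Icc t (t + δ/2), measurableSet_Icc, ?_, ?_⟩
      · rw [Real.volume_Icc]; ring_nf
      · intro s hs
        have h1 : dist s t < δ := by
          rw [Real.dist_eq, abs_of_nonneg (by linarith [hs.1])]
          linarith [hs.2]
        have h2 := hδε s h1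
        rw [Real.dist_eq] at h2
        have h2' := (abs_lt.mp h2).2
        have hm := hFnmono n hs.1
        have : ε/2 ≤ Fn n s - F s := by linarith
        exact this.trans (le_abs_self _)
    · have h3 : ε ≤ F t - Fn n t := by
        rw [abs_of_nonpos (by linarith)] at h; linarith
      refine ⟨Icc (t - δ/2) t, measurableSet_Icc, ?_, ?_⟩
      · rw [Real.volume_Icc]; ring_nf
      · intro s hs
        have h1 : dist s t < δ := by
          rw [Real.dist_eq, abs_of_nonpos (by linarith [hs.2])]
          linarith [hs.1]
        have h2 := hδε s h1
        rw [Real.dist_eq] at h2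
        have h2' := (abs_lt.mp h2).1
        have hm := hFnmono n hs.2
        have : ε/2 ≤ F s - Fn n s := by linarith
        calc ε/2 ≤ F s - Fn n s := this
          _ ≤ |F s - Fn n s| := le_abs_self _
          _ = |Fn n s - F s| := abs_sub_comm _ _
  obtain ⟨I, hImeas, hIvol, hIbound⟩ := key
  have hmono : eLpNorm (I.indicator fun _ => (ε/2 : ℝ)) 2 volume ≤
      eLpNorm (fun s => Fn n s - F s) 2 volume := by
    apply eLpNorm_mono
    intro s
    by_cases hsI : s ∈ I
    · rw [Set.indicator_of_mem hsI, Real.norm_eq_abs, Real.norm_eq_abs,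
        abs_of_nonneg (by linarith : (0:ℝ) ≤ ε/2)]
      exact hIbound s hsI
    · simp [Set.indicator_of_notMem hsI]
  have heq : eLpNorm (I.indicator fun _ => (ε/2 : ℝ)) 2 volume = c := by
    rw [eLpNorm_indicator_const hImeas two_ne_zero ENNReal.ofNat_ne_top, hIvol, hc]
    rw [← Real.enorm_eq_ofReal (by linarith : (0:ℝ) ≤ ε/2)]
    norm_num
  exact absurd (lt_of_le_of_lt hmono (hN n hn)) (by rw [heq]; exact lt_irrefl c)
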